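/- Assume: (A2) the program (P_b) has a unique optimal solution x*(b); (B1) the random vectors G_n = r_n(b_n − b) converge in distribution to a random vector G whose law is absolutely continuous with respect to Lebesgue measure on ℝ^m, where r_n → ∞; (B2) ℙ(OPT(b_n) ≠ ∅) → 1; and the optimal solution x*(b) is nondegenerate, i.e. it has exactly m nonzero coordinates. Then there is a unique basis I_1 that is both primal feasible and dual feasible, and for any measurable choice x*(b_n) of an element of OPT(b_n) (on the event that OPT(b_n) is non-empty), the random vectors r_n(x*(b_n) − x*(b)) converge in distribution to x(I_1, G), an invertible linear function of G. -/

import Mathlib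

open Matrix

noncomputable section

variable {m d : ℕ}

/-- The primal feasible set `P(b) = {x : A x = b, x ≥ 0}`. -/
def feasSet (A : Matrix (Fin m) (Fin d) ℝ) (b : Fin m → ℝ) : Set (Fin d → ℝ) :=
  {x | A *ᵥ x = b ∧ ∀ i, 0 ≤ x i}

/-- The optimality set `OPT(b)` of the primal program `(P_b)`. -/
def optSet (A : Matrix (Fin m) (Fin d) ℝ) (b : Fin m → ℝ) (c : Fin d → ℝ) :
    Set (Fin d → ℝ) :=
  {x | x ∈ feasSet A b ∧ ∀ y ∈ feasSet A b, c ⬝ᵥ x ≤ c ⬝ᵥ y}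

/-- The dual feasible set `{λ : Aᵀ λ ≤ c}`. -/
def dualFeasSet (A : Matrix (Fin m) (Fin d) ℝ) (c : Fin d → ℝ) : Set (Fin m → ℝ) :=
  {l | ∀ j, (Aᵀ *ᵥ l) j ≤ c j}

/-- The set of optimal solutions of the dual program `(D_b)`. -/
def dualOptSet (A : Matrix (Fin m) (Fin d) ℝ) (b : Fin m → ℝ) (c : Fin d → ℝ) :
    Set (Fin m → ℝ) :=
  {l | l ∈ dualFeasSet A c ∧ ∀ mu ∈ dualFeasSet A c, b ⬝ᵥ mu ≤ b ⬝ᵥ l}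

/-- The submatrix `A_I` of the columns indexed by `I`, where the subset
`I ⊆ {1,…,d}` of cardinality `m` is encoded by the strictly monotone
enumeration `e : Fin m → Fin d` of its elements. -/
def subMat (A : Matrix (Fin m) (Fin d) ℝ) (e : Fin m → Fin d) :
    Matrix (Fin m) (Fin m) ℝ :=
  A.submatrix id e

/-- `e` encodes a basis: a subset of size `m` of the columns (strictly monotone
enumeration) whose corresponding submatrix `A_I` is invertible. -/
def IsBasis (A : Matrix (Fin m) (Fin d) ℝ) (e : Fin m → Fin d) : Prop :=
  StrictMono e ∧ IsUnit (subMat A e).det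

/-- The primal basic solution `x(I, v)`: equal to `(A_I)⁻¹ v` on the coordinates
in `I` and `0` elsewhere. -/
def basicSol (A : Matrix (Fin m) (Fin d) ℝ) (e : Fin m → Fin d) (v : Fin m → ℝ) :
    Fin d → ℝ :=
  fun i => ∑ j, if e j = i then ((subMat A e)⁻¹ *ᵥ v) j else 0

/-- The dual basic solution `λ(I) = (A_I)⁻ᵀ c_I`. -/
def dualSol (A : Matrix (Fin m) (Fin d) ℝ) (c : Fin d → ℝ) (e : Fin m → Fin d) :
    Fin m → ℝ :=
  ((subMat A e)ᵀ)⁻¹ *ᵥ fun j => c (e j)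

/-- `I` is a dual feasible basis: `Aᵀ λ(I) ≤ c`. -/
def DualFeasibleBasis (A : Matrix (Fin m) (Fin d) ℝ) (c : Fin d → ℝ)
    (e : Fin m → Fin d) : Prop :=
  IsBasis A e ∧ ∀ j, (Aᵀ *ᵥ dualSol A c e) j ≤ c j

/-- `I` is a primal feasible basis for `(P_b)`: `x(I,b) ≥ 0`. -/
def PrimalFeasibleBasis (A : Matrix (Fin m) (Fin d) ℝ) (b : Fin m → ℝ)
    (e : Fin m → Fin d) : Prop :=
  IsBasis A e ∧ ∀ i, 0 ≤ basicSol A e b i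

open MeasureTheory Filter Topology

/-- Convergence in distribution (weak convergence of pushforward laws),
characterized via bounded continuous test functions. -/
def TendstoInDistribution {Ω E : Type*} [MeasurableSpace Ω] (P : Measure Ω)
    [TopologicalSpace E] (X : ℕ → Ω → E) (Y : Ω → E) : Prop :=
  ∀ f : BoundedContinuousFunction E ℝ,
    Tendsto (fun n => ∫ ω, f (X n ω) ∂P) atTop (𝓝 (∫ ω, f (Y ω) ∂P))

namespace Stmt5Aux
open Matrix

variable {m d : ℕ}

/-- extension by zero along `e`. -/
def extMap (e : Fin m → Fin d) (u : Fin m → ℝ) : Fin d → ℝ :=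
  fun i => ∑ j, if e j = i then u j else 0

lemma basicSol_eq (A : Matrix (Fin m) (Fin d) ℝ) (e : Fin m → Fin d) (v : Fin m → ℝ) :
    basicSol A e v = extMap e ((subMat A e)⁻¹ *ᵥ v) := rfl

lemma extMap_apply {e : Fin m → Fin d} (he : Function.Injective e) (u : Fin m → ℝ) (j : Fin m) :
    extMap e u (e j) = u j := by
  simp [extMap, he.eq_iff]

lemma extMap_not_mem {e : Fin m → Fin d} {i : Fin d} (hi : i ∉ Set.range e) (u : Fin m → ℝ) :
    extMap e u i = 0 :=
  Finset.sum_eq_zero fun j _ => if_neg fun h => hi ⟨j, h⟩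

lemma mulVec_extMap (A : Matrix (Fin m) (Fin d) ℝ) (e : Fin m → Fin d) (u : Fin m → ℝ) :
    A *ᵥ extMap e u = subMat A e *ᵥ u := by
  funext k
  simp only [mulVec, dotProduct, extMap, Finset.mul_sum, mul_ite, mul_zero, subMat,
    Matrix.submatrix_apply, id_eq]
  rw [Finset.sum_comm]
  refine Finset.sum_congr rfl fun j _ => ?_
  simp

lemma dot_extMap (c : Fin d → ℝ) (e : Fin m → Fin d) (u : Fin m → ℝ) :
    c ⬝ᵥ extMap e u = ∑ j, c (e j) * u j := by
  simp only [dotProduct, extMap, Finset.mul_sum, mul_ite, mul_zero]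
  rw [Finset.sum_comm]
  refine Finset.sum_congr rfl fun j _ => ?_
  simp

lemma extMap_comp {e : Fin m → Fin d} (he : Function.Injective e) (y : Fin d → ℝ)
    (hy : ∀ i, i ∉ Set.range e → y i = 0) : extMap e (fun j => y (e j)) = y := by
  funext i
  by_cases hi : i ∈ Set.range e
  · obtain ⟨j, rfl⟩ := hi
    exact extMap_apply he _ j
  · rw [extMap_not_mem hi, hy i hi]

lemma extMap_sub (e : Fin m → Fin d) (u v : Fin m → ℝ) :
    extMap e (u - v) = extMap e u - extMap e v := by
  funext i
  simp only [extMap, Pi.sub_apply]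
  rw [← Finset.sum_sub_distrib]
  exact Finset.sum_congr rfl fun j _ => by split <;> simp

lemma extMap_smul (e : Fin m → Fin d) (r : ℝ) (u : Fin m → ℝ) :
    extMap e (r • u) = r • extMap e u := by
  funext i
  simp only [extMap, Pi.smul_apply, smul_eq_mul, Finset.mul_sum]
  exact Finset.sum_congr rfl fun j _ => by split <;> simp

/-- the key dual-primal pairing identity. -/
lemma dot_sub_dual (A : Matrix (Fin m) (Fin d) ℝ) (c : Fin d → ℝ) (l : Fin m → ℝ)
    (y : Fin d → ℝ) : c ⬝ᵥ y - l ⬝ᵥ (A *ᵥ y) = ∑ i, (c i - (Aᵀ *ᵥ l) i) * y i := by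
  rw [Matrix.dotProduct_mulVec, ← Matrix.transpose_transpose A, Matrix.vecMul_transpose,
    Matrix.transpose_transpose]
  simp [dotProduct, Finset.sum_sub_distrib, sub_mul]

lemma transpose_subMat_mulVec (A : Matrix (Fin m) (Fin d) ℝ) (e : Fin m → Fin d)
    (l : Fin m → ℝ) (j : Fin m) : ((subMat A e)ᵀ *ᵥ l) j = (Aᵀ *ᵥ l) (e j) := by
  simp [Matrix.mulVec, dotProduct, subMat]

section basis

variable {A : Matrix (Fin m) (Fin d) ℝ} {e : Fin m → Fin d}

lemma mulVec_basicSol (hdet : IsUnit (subMat A e).det) (v : Fin m → ℝ) :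
    A *ᵥ basicSol A e v = v := by
  rw [basicSol_eq, mulVec_extMap, Matrix.mulVec_mulVec, Matrix.mul_nonsing_inv _ hdet,
    Matrix.one_mulVec]

lemma dualSol_range (hdet : IsUnit (subMat A e).det) (c : Fin d → ℝ) (j : Fin m) :
    (Aᵀ *ᵥ dualSol A c e) (e j) = c (e j) := by
  rw [← transpose_subMat_mulVec, dualSol, Matrix.mulVec_mulVec,
    Matrix.mul_nonsing_inv _ (by rwa [Matrix.det_transpose]), Matrix.one_mulVec]

lemma dot_basicSol (hdet : IsUnit (subMat A e).det) (c : Fin d → ℝ) (v : Fin m → ℝ) :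
    c ⬝ᵥ basicSol A e v = dualSol A c e ⬝ᵥ v := by
  have h := dot_sub_dual A c (dualSol A c e) (basicSol A e v)
  rw [mulVec_basicSol hdet] at h
  have hz : ∑ i, (c i - (Aᵀ *ᵥ dualSol A c e) i) * basicSol A e v i = 0 := by
    refine Finset.sum_eq_zero fun i _ => ?_
    by_cases hi : i ∈ Set.range e
    · obtain ⟨j, rfl⟩ := hi
      rw [dualSol_range hdet, sub_self, zero_mul]
    · rw [basicSol_eq, extMap_not_mem hi, mul_zero]
  linarith [h, hz]

/-- weak duality: a primal+dual feasible basis gives an optimal solution. -/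
lemma basicSol_mem_optSet (b : Fin m → ℝ) (c : Fin d → ℝ)
    (hp : PrimalFeasibleBasis A b e) (hd : DualFeasibleBasis A c e) :
    basicSol A e b ∈ optSet A b c := by
  have hdet := hp.1.2
  refine ⟨⟨mulVec_basicSol hdet b, hp.2⟩, fun y hy => ?_⟩
  rw [dot_basicSol hdet]
  have h := dot_sub_dual A c (dualSol A c e) y
  rw [hy.1] at h
  have hnn : 0 ≤ ∑ i, (c i - (Aᵀ *ᵥ dualSol A c e) i) * y i :=
    Finset.sum_nonneg fun i _ => mul_nonneg (sub_nonneg.2 (hd.2 i)) (hy.2 i)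
  linarith

end basis

end Stmt5Aux

namespace Stmt5Aux
open Matrix

variable {m d : ℕ}

lemma exists_scale {k : ℕ} (f g : Fin k → ℝ) (hg : ∀ j, 0 < g j) :
    ∃ t : ℝ, 0 < t ∧ ∀ j, t * |f j| < g j := by
  rcases isEmpty_or_nonempty (Fin k) with h | h
  · exact ⟨1, one_pos, fun j => (h.elim j)⟩
  obtain ⟨j0, -, hj0⟩ := Finset.exists_min_image Finset.univ
    (fun j => g j / (|f j| + 1)) ⟨Classical.arbitrary _, Finset.mem_univ _⟩
  have hpos : ∀ j, 0 < g j / (|f j| + 1) := fun j => div_pos (hg j) (by positivity)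
  refine ⟨g j0 / (|f j0| + 1), hpos j0, fun j => ?_⟩
  calc g j0 / (|f j0| + 1) * |f j| ≤ g j / (|f j| + 1) * |f j| :=
        mul_le_mul_of_nonneg_right (hj0 j (Finset.mem_univ j)) (abs_nonneg _)
    _ < g j := by
        rw [div_mul_eq_mul_div, div_lt_iff₀ (by positivity)]
        nlinarith [hg j, abs_nonneg (f j)]

section main

variable {A : Matrix (Fin m) (Fin d) ℝ} {b : Fin m → ℝ} {c : Fin d → ℝ}
  {xstar : Fin d → ℝ} {e : Fin m → Fin d} {w : Fin d → ℝ}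

lemma xstar_opt (hunique : optSet A b c = {xstar}) : xstar ∈ optSet A b c := by
  rw [hunique]; rfl

/-- generic perturbation lemma. -/
lemma perturb (hunique : optSet A b c = {xstar})
    (hw0 : A *ᵥ w = 0) {t : ℝ} (ht : 0 < t)
    (hfeas : ∀ i, 0 ≤ xstar i + t * w i) :
    0 ≤ c ⬝ᵥ w ∧ (c ⬝ᵥ w ≤ 0 → w = 0) := by
  obtain ⟨⟨hxb, hxnn⟩, hxopt⟩ := xstar_opt hunique
  set z : Fin d → ℝ := xstar + t • w with hz
  have hzfeas : z ∈ feasSet A b := by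
    constructor
    · rw [hz, Matrix.mulVec_add, Matrix.mulVec_smul, hw0, hxb]; simp
    · intro i; simpa [hz] using hfeas i
  have hcz : c ⬝ᵥ z = c ⬝ᵥ xstar + t * (c ⬝ᵥ w) := by
    simp [hz, dotProduct_add, dotProduct_smul, smul_eq_mul]
  have h1 : c ⬝ᵥ xstar ≤ c ⬝ᵥ z := hxopt z hzfeas
  have hcw : 0 ≤ c ⬝ᵥ w := by nlinarith
  refine ⟨hcw, fun hle => ?_⟩
  have hceq : c ⬝ᵥ z = c ⬝ᵥ xstar := by nlinarith
  have hzopt : z ∈ optSet A b c := ⟨hzfeas, fun y hy => hceq ▸ hxopt y hy⟩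
  rw [hunique, Set.mem_singleton_iff] at hzopt
  have : t • w = 0 := by
    have := congrArg (fun v => v - xstar) hzopt
    simpa [hz] using this
  funext i
  have := congrFun this i
  simp only [Pi.smul_apply, smul_eq_mul, Pi.zero_apply] at this ⊢
  exact (mul_eq_zero.1 this).resolve_left (ne_of_gt ht)

variable (hunique : optSet A b c = {xstar})
  (he : Function.Injective e) (hrange : Set.range e = {i | xstar i ≠ 0})

include hunique he hrange

lemma xstar_pos (j : Fin m) : 0 < xstar (e j) := by
  have hne : xstar (e j) ≠ 0 := by
    have : e j ∈ Set.range e := ⟨j, rfl⟩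
    rwa [hrange] at this
  exact lt_of_le_of_ne ((xstar_opt hunique).1.2 (e j)) (Ne.symm hne)

lemma subMat_ker (u : Fin m → ℝ) (hu : subMat A e *ᵥ u = 0) : u = 0 := by
  have hAw : ∀ v : Fin m → ℝ, subMat A e *ᵥ v = 0 → A *ᵥ extMap e v = 0 := by
    intro v hv; rw [mulVec_extMap, hv]
  obtain ⟨t, ht, htlt⟩ := exists_scale u (fun j => xstar (e j))
    (fun j => xstar_pos hunique he hrange j)
  have hfeas : ∀ (s : ℝ), |s| ≤ 1 → ∀ i, 0 ≤ xstar i + t * (s • extMap e u) i := by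
    intro s hs i
    by_cases hi : i ∈ Set.range e
    · obtain ⟨j, rfl⟩ := hi
      rw [Pi.smul_apply, extMap_apply he, smul_eq_mul]
      have h1 : t * |s * u j| < xstar (e j) := by
        have : |s * u j| ≤ |u j| := by
          rw [abs_mul]
          calc |s| * |u j| ≤ 1 * |u j| := mul_le_mul_of_nonneg_right hs (abs_nonneg _)
            _ = |u j| := one_mul _
        calc t * |s * u j| ≤ t * |u j| := mul_le_mul_of_nonneg_left this ht.le
          _ < xstar (e j) := htlt j
      have := neg_abs_le (s * u j)
      nlinarith [abs_nonneg (s * u j)]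
    · rw [Pi.smul_apply, extMap_not_mem hi, smul_zero, mul_zero, add_zero]
      exact (xstar_opt hunique).1.2 i
  have hw0 : A *ᵥ extMap e u = 0 := hAw u hu
  have hw0' : A *ᵥ ((-1 : ℝ) • extMap e u) = 0 := by
    rw [Matrix.mulVec_smul, hw0, smul_zero]
  have hp := perturb hunique hw0 ht (by simpa using hfeas 1 (by norm_num))
  have hp' := perturb hunique hw0' ht (hfeas (-1) (by norm_num))
  have hcw : c ⬝ᵥ ((-1 : ℝ) • extMap e u) = -(c ⬝ᵥ extMap e u) := by
    simp [dotProduct_smul]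
  have hzero : extMap e u = 0 := hp.2 (by rw [hcw] at hp'; linarith [hp.1, hp'.1])
  funext j
  have h := congrFun hzero (e j)
  rw [extMap_apply he u j] at h
  simpa using h

end main
end Stmt5Aux

namespace Stmt5Aux
open Matrix

variable {m d : ℕ}
variable {A : Matrix (Fin m) (Fin d) ℝ} {b : Fin m → ℝ} {c : Fin d → ℝ}
  {xstar : Fin d → ℝ} {e : Fin m → Fin d}

section strict

variable (hunique : optSet A b c = {xstar})
  (he : Function.Injective e) (hrange : Set.range e = {i | xstar i ≠ 0})
  (hdet : IsUnit (subMat A e).det)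

include hunique he hrange hdet

/-- strict dual feasibility off the support. -/
lemma dual_strict {i : Fin d} (hi : i ∉ Set.range e) :
    (Aᵀ *ᵥ dualSol A c e) i < c i := by
  set col : Fin m → ℝ := fun k => A k i with hcol
  set w : Fin d → ℝ := Pi.single i 1 - basicSol A e col with hwdef
  have hw0 : A *ᵥ w = 0 := by
    rw [hwdef, Matrix.mulVec_sub, mulVec_basicSol hdet, Matrix.mulVec_single]
    funext k; simp [hcol]
  set u : Fin m → ℝ := (subMat A e)⁻¹ *ᵥ col with hu
  obtain ⟨t, ht, htlt⟩ := exists_scale u (fun j => xstar (e j))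
    (fun j => xstar_pos hunique he hrange j)
  have hwi : ∀ i', i' ∉ Set.range e → i' ≠ i → w i' = 0 := by
    intro i' h1 h2
    rw [hwdef, Pi.sub_apply, basicSol_eq, extMap_not_mem h1, Pi.single_apply,
      if_neg h2, sub_zero]
  have hfeas : ∀ i', 0 ≤ xstar i' + t * w i' := by
    intro i'
    by_cases hir : i' ∈ Set.range e
    · obtain ⟨j, rfl⟩ := hir
      have hne : e j ≠ i := fun h => hi (h ▸ ⟨j, rfl⟩)
      have hwj : w (e j) = -u j := by
        rw [hwdef, Pi.sub_apply, Pi.single_apply, if_neg hne, basicSol_eq,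
          extMap_apply he, zero_sub, hu]
      rw [hwj]
      have := htlt j
      have := le_abs_self (u j)
      nlinarith
    · by_cases h2 : i' = i
      · subst h2
        have hwi' : w i' = 1 := by
          rw [hwdef, Pi.sub_apply, Pi.single_eq_same, basicSol_eq, extMap_not_mem hi,
            sub_zero]
        rw [hwi']
        have := (xstar_opt hunique).1.2 i'
        nlinarith
      · rw [hwi i' hir h2, mul_zero, add_zero]
        exact (xstar_opt hunique).1.2 i'
  have hp := perturb hunique hw0 ht hfeas
  have hcw : c ⬝ᵥ w = c i - (Aᵀ *ᵥ dualSol A c e) i := by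
    rw [hwdef, dotProduct_sub, dot_basicSol hdet]
    congr 1
    · simp [dotProduct, Pi.single_apply]
    · simp [Matrix.mulVec, dotProduct, dotProduct_comm, hcol, mul_comm]
  have hwine : w i = 1 := by
    rw [hwdef, Pi.sub_apply, Pi.single_eq_same, basicSol_eq, extMap_not_mem hi, sub_zero]
  rcases lt_or_eq_of_le hp.1 with h | h
  · rw [hcw] at h; linarith
  · exfalso
    have := hp.2 (le_of_eq h.symm)
    rw [this] at hwine
    simp at hwine

/-- key lemma: if the basic solution for `e` at `b'` is nonnegative, it is the
unique optimal solution of `(P_{b'})`. -/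
lemma opt_eq_basicSol (b' : Fin m → ℝ)
    (hb' : ∀ j, 0 ≤ ((subMat A e)⁻¹ *ᵥ b') j)
    {y : Fin d → ℝ} (hy : y ∈ optSet A b' c) : y = basicSol A e b' := by
  set x' : Fin d → ℝ := basicSol A e b' with hx'
  have hx'feas : x' ∈ feasSet A b' := by
    refine ⟨mulVec_basicSol hdet b', fun i => ?_⟩
    by_cases hir : i ∈ Set.range e
    · obtain ⟨j, rfl⟩ := hir
      rw [hx', basicSol_eq, extMap_apply he]
      exact hb' j
    · rw [hx', basicSol_eq, extMap_not_mem hir]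
  have hle : c ⬝ᵥ y ≤ c ⬝ᵥ x' := hy.2 x' hx'feas
  have hcx' : c ⬝ᵥ x' = dualSol A c e ⬝ᵥ b' := dot_basicSol hdet c b'
  have hiden := dot_sub_dual A c (dualSol A c e) y
  rw [hy.1.1] at hiden
  have hterm : ∀ i ∈ Finset.univ, 0 ≤ (c i - (Aᵀ *ᵥ dualSol A c e) i) * y i := by
    intro i _
    refine mul_nonneg (sub_nonneg.2 ?_) (hy.1.2 i)
    by_cases hir : i ∈ Set.range e
    · obtain ⟨j, rfl⟩ := hir
      exact le_of_eq (dualSol_range hdet c j)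
    · exact (dual_strict hunique he hrange hdet hir).le
  have hsum0 : ∑ i, (c i - (Aᵀ *ᵥ dualSol A c e) i) * y i = 0 := by
    have h1 : ∑ i, (c i - (Aᵀ *ᵥ dualSol A c e) i) * y i ≤ 0 := by linarith
    exact le_antisymm h1 (Finset.sum_nonneg hterm)
  have hzero := (Finset.sum_eq_zero_iff_of_nonneg hterm).1 hsum0
  have hysupp : ∀ i, i ∉ Set.range e → y i = 0 := by
    intro i hir
    have h := hzero i (Finset.mem_univ i)
    have hlt := dual_strict (c := c) hunique he hrange hdet hir
    rcases mul_eq_zero.1 h with h' | h'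
    · exact absurd h' (by intro hc; linarith [sub_eq_zero.1 hc])
    · exact h'
  have hyext : extMap e (fun j => y (e j)) = y := extMap_comp he y hysupp
  have hAy : subMat A e *ᵥ (fun j => y (e j)) = b' := by
    rw [← mulVec_extMap, hyext, hy.1.1]
  have : (fun j => y (e j)) = (subMat A e)⁻¹ *ᵥ b' := by
    rw [← hAy, Matrix.mulVec_mulVec, Matrix.nonsing_inv_mul _ hdet, Matrix.one_mulVec]
  rw [hx', basicSol_eq, ← this, hyext]

end strict
end Stmt5Aux

namespace Stmt5Aux
open Matrix

variable {m d : ℕ}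
variable {A : Matrix (Fin m) (Fin d) ℝ} {b : Fin m → ℝ} {c : Fin d → ℝ}
  {xstar : Fin d → ℝ} {e : Fin m → Fin d}

section pack

variable (hunique : optSet A b c = {xstar})
  (hmono : StrictMono e) (hrange : Set.range e = {i | xstar i ≠ 0})

include hunique hmono hrange

lemma det_unit : IsUnit (subMat A e).det := by
  refine (Matrix.isUnit_iff_isUnit_det _).1 (Matrix.mulVec_injective_iff_isUnit.1 ?_)
  intro u v huv
  have h : subMat A e *ᵥ (u - v) = 0 := by
    rw [Matrix.mulVec_sub, huv, sub_self]
  have := subMat_ker hunique hmono.injective hrange (u - v) h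
  exact sub_eq_zero.1 this

lemma basicSol_b : basicSol A e b = xstar := by
  have hx := xstar_opt hunique
  have hsupp : ∀ i, i ∉ Set.range e → xstar i = 0 := by
    intro i hi
    rw [hrange] at hi
    simpa using hi
  have hxe : extMap e (fun j => xstar (e j)) = xstar := extMap_comp hmono.injective xstar hsupp
  have hAx : subMat A e *ᵥ (fun j => xstar (e j)) = b := by
    rw [← mulVec_extMap, hxe, hx.1.1]
  have hInv : (subMat A e)⁻¹ *ᵥ b = fun j => xstar (e j) := by
    rw [← hAx, Matrix.mulVec_mulVec,
      Matrix.nonsing_inv_mul _ (det_unit hunique hmono hrange), Matrix.one_mulVec]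
  rw [basicSol_eq, hInv, hxe]

lemma primal_feas : PrimalFeasibleBasis A b e := by
  refine ⟨⟨hmono, det_unit hunique hmono hrange⟩, fun i => ?_⟩
  rw [basicSol_b hunique hmono hrange]
  exact (xstar_opt hunique).1.2 i

lemma dual_feas : DualFeasibleBasis A c e := by
  refine ⟨⟨hmono, det_unit hunique hmono hrange⟩, fun i => ?_⟩
  by_cases hi : i ∈ Set.range e
  · obtain ⟨j, rfl⟩ := hi
    exact le_of_eq (dualSol_range (det_unit hunique hmono hrange) c j)
  · exact (dual_strict hunique hmono.injective hrange (det_unit hunique hmono hrange) hi).le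

lemma basis_unique (e' : Fin m → Fin d) (hp' : PrimalFeasibleBasis A b e')
    (hd' : DualFeasibleBasis A c e') : e' = e := by
  have hopt' : basicSol A e' b = xstar := by
    have h := basicSol_mem_optSet b c hp' hd'
    rwa [hunique, Set.mem_singleton_iff] at h
  have hsub : {i | xstar i ≠ 0} ⊆ Set.range e' := by
    intro i hi
    by_contra hir
    exact hi (by rw [← hopt', basicSol_eq, extMap_not_mem hir])
  have hcard' : (Set.range e').ncard = ({i | xstar i ≠ 0} : Set (Fin d)).ncard := by
    rw [← Set.image_univ, Set.ncard_image_of_injective _ hp'.1.1.injective,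
      ← hrange, ← Set.image_univ, Set.ncard_image_of_injective _ hmono.injective]
  have heq : {i | xstar i ≠ 0} = Set.range e' :=
    Set.eq_of_subset_of_ncard_le hsub (le_of_eq hcard') (Set.toFinite _)
  have hre : Set.range e' = Set.range e := by rw [← heq, hrange]
  exact (@StrictMono.range_inj (Fin m) (Fin d) _ _ (inferInstance : WellFoundedLT (Fin m))
    e' e hp'.1.1 hmono).1 hre

end pack

lemma exists_e (hnondeg : {i | xstar i ≠ 0}.ncard = m) :
    ∃ e : Fin m → Fin d, StrictMono e ∧ Set.range e = {i | xstar i ≠ 0} := by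
  classical
  have hfin : ({i | xstar i ≠ 0} : Set (Fin d)).Finite := Set.toFinite _
  have hcard : hfin.toFinset.card = m := by
    rw [← Set.ncard_eq_toFinset_card _ hfin, hnondeg]
  refine ⟨fun j => hfin.toFinset.orderEmbOfFin hcard j, ?_, ?_⟩
  · exact (hfin.toFinset.orderEmbOfFin hcard).strictMono
  · have := Finset.range_orderEmbOfFin hfin.toFinset hcard
    rw [show (fun j => hfin.toFinset.orderEmbOfFin hcard j)
        = ⇑(hfin.toFinset.orderEmbOfFin hcard) from rfl, this]
    exact hfin.coe_toFinset

end Stmt5Aux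

namespace Stmt5Aux
open Matrix MeasureTheory Filter Topology BoundedContinuousFunction

variable {m d : ℕ}

lemma basicSol_smul_sub (A : Matrix (Fin m) (Fin d) ℝ) (e : Fin m → Fin d) (r : ℝ)
    (u v : Fin m → ℝ) :
    basicSol A e (r • (u - v)) = r • (basicSol A e u - basicSol A e v) := by
  rw [basicSol_eq, basicSol_eq, basicSol_eq, Matrix.mulVec_smul, Matrix.mulVec_sub,
    extMap_smul, extMap_sub]

lemma continuous_basicSol (A : Matrix (Fin m) (Fin d) ℝ) (e : Fin m → Fin d) :
    Continuous fun v : Fin m → ℝ => basicSol A e v := by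
  refine continuous_pi fun i => ?_
  unfold basicSol
  refine continuous_finset_sum _ fun j _ => ?_
  by_cases h : e j = i
  · simp only [h, if_true]
    show Continuous fun v : Fin m → ℝ => ∑ k, (subMat A e)⁻¹ j k * v k
    exact continuous_finset_sum _ fun k _ => continuous_const.mul (continuous_apply k)
  · simp only [h, if_false]
    exact continuous_const

lemma measurable_mulVec_comp {k : ℕ} {Ω : Type*} [MeasurableSpace Ω]
    (M : Matrix (Fin k) (Fin k) ℝ) {X : Ω → Fin k → ℝ} (hX : Measurable X) (j : Fin k) :
    Measurable fun ω => (M *ᵥ X ω) j := by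
  show Measurable fun ω => ∑ l, M j l * X ω l
  exact Finset.measurable_sum _ fun l _ =>
    (measurable_const.mul ((measurable_pi_apply l).comp hX))

/-- the cutoff test function `x ↦ min 1 (max (‖x‖ - R) 0)`. -/
def cutoff (k : ℕ) (R : ℝ) : BoundedContinuousFunction (Fin k → ℝ) ℝ :=
  BoundedContinuousFunction.mkOfBound
    ⟨fun x => min 1 (max (‖x‖ - R) 0), by
      refine Continuous.min continuous_const (Continuous.max ?_ continuous_const)
      exact continuous_norm.sub continuous_const⟩ 1
    (by
      intro x y
      have h1 : ∀ z : Fin k → ℝ, 0 ≤ min 1 (max (‖z‖ - R) 0) :=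
        fun z => le_min one_pos.le (le_max_right _ _)
      have h2 : ∀ z : Fin k → ℝ, min 1 (max (‖z‖ - R) 0) ≤ 1 := fun z => min_le_left _ _
      rw [Real.dist_eq, abs_sub_le_iff]
      constructor <;> [skip; skip] <;>
        · have := h1 x; have := h2 x; have := h1 y; have := h2 y
          simp only [ContinuousMap.coe_mk]
          linarith)

lemma cutoff_nonneg {k : ℕ} (R : ℝ) (x : Fin k → ℝ) : 0 ≤ cutoff k R x :=
  le_min one_pos.le (le_max_right _ _)

lemma cutoff_le_one {k : ℕ} (R : ℝ) (x : Fin k → ℝ) : cutoff k R x ≤ 1 :=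
  min_le_left _ _

lemma cutoff_eq_one {k : ℕ} {R : ℝ} {x : Fin k → ℝ} (h : R + 1 ≤ ‖x‖) :
    cutoff k R x = 1 := by
  have : (1 : ℝ) ≤ max (‖x‖ - R) 0 := le_max_of_le_left (by linarith)
  exact min_eq_left this

lemma cutoff_eq_zero {k : ℕ} {R : ℝ} {x : Fin k → ℝ} (h : ‖x‖ ≤ R) :
    cutoff k R x = 0 := by
  have : max (‖x‖ - R) 0 = 0 := max_eq_right (by linarith)
  show min 1 (max (‖x‖ - R) 0) = 0
  rw [this]
  exact min_eq_right one_pos.le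

section tail

variable {Ω : Type*} [MeasurableSpace Ω] {P : Measure Ω} [IsProbabilityMeasure P] {k : ℕ}

lemma integrable_bcf_comp (f : BoundedContinuousFunction (Fin k → ℝ) ℝ)
    {X : Ω → Fin k → ℝ} (hX : Measurable X) : Integrable (fun ω => f (X ω)) P :=
  Integrable.mono' (integrable_const ‖f‖)
    (f.continuous.measurable.comp hX).aestronglyMeasurable
    (ae_of_all _ fun ω => f.norm_coe_le_norm (X ω))

lemma meas_norm_set {X : Ω → Fin k → ℝ} (hX : Measurable X) (a : ℝ) :
    MeasurableSet {ω | a ≤ ‖X ω‖} :=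
  measurableSet_le measurable_const (measurable_norm.comp hX)

lemma integral_cutoff_le {X : Ω → Fin k → ℝ} (hX : Measurable X) (R : ℝ) :
    ∫ ω, cutoff k R (X ω) ∂P ≤ (P {ω | R ≤ ‖X ω‖}).toReal := by
  have hmeas := meas_norm_set hX R
  have h := integral_indicator_const (μ := P) (1 : ℝ) hmeas
  rw [smul_eq_mul, mul_one, measureReal_def] at h
  rw [← h]
  refine integral_mono (integrable_bcf_comp _ hX) ((integrable_const _).indicator hmeas) ?_
  intro ω
  by_cases hω : R ≤ ‖X ω‖
  · simp only [Set.indicator_apply, Set.mem_setOf_eq, if_pos hω]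
    exact cutoff_le_one R (X ω)
  · simp only [Set.indicator_apply, Set.mem_setOf_eq, if_neg hω]
    rw [cutoff_eq_zero (le_of_not_ge hω)]

lemma le_integral_cutoff {X : Ω → Fin k → ℝ} (hX : Measurable X) {R a : ℝ}
    (h : R + 1 ≤ a) :
    (P {ω | a ≤ ‖X ω‖}).toReal ≤ ∫ ω, cutoff k R (X ω) ∂P := by
  have hmeas := meas_norm_set hX a
  have hid := integral_indicator_const (μ := P) (1 : ℝ) hmeas
  rw [smul_eq_mul, mul_one, measureReal_def] at hid
  rw [← hid]
  refine integral_mono ((integrable_const _).indicator hmeas) (integrable_bcf_comp _ hX) ?_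
  intro ω
  by_cases hω : a ≤ ‖X ω‖
  · simp only [Set.indicator_apply, Set.mem_setOf_eq, if_pos hω]
    rw [cutoff_eq_one (le_trans h hω)]
  · simp only [Set.indicator_apply, Set.mem_setOf_eq, if_neg hω]
    exact cutoff_nonneg R (X ω)

lemma tail_tendsto_zero {X : ℕ → Ω → Fin k → ℝ} (hX : ∀ n, Measurable (X n))
    {G : Ω → Fin k → ℝ} (hG : Measurable G)
    (hconv : ∀ f : BoundedContinuousFunction (Fin k → ℝ) ℝ,
      Tendsto (fun n => ∫ ω, f (X n ω) ∂P) atTop (𝓝 (∫ ω, f (G ω) ∂P)))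
    {cseq : ℕ → ℝ} (hc : Tendsto cseq atTop atTop) :
    Tendsto (fun n => (P {ω | cseq n ≤ ‖X n ω‖}).toReal) atTop (𝓝 0) := by
  have htailG : Tendsto (fun j : ℕ => (P {ω | (j : ℝ) ≤ ‖G ω‖}).toReal) atTop (𝓝 0) := by
    have hsets : ∀ j : ℕ, MeasurableSet {ω | (j : ℝ) ≤ ‖G ω‖} := fun j => meas_norm_set hG _
    have hanti : Antitone fun j : ℕ => {ω | (j : ℝ) ≤ ‖G ω‖} := by
      intro a b hab ω hω
      exact le_trans (show (a:ℝ) ≤ (b:ℝ) from Nat.cast_le.2 hab) hω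
    have hempty : ⋂ j : ℕ, {ω | (j : ℝ) ≤ ‖G ω‖} = ∅ := by
      ext ω
      simp only [Set.mem_iInter, Set.mem_setOf_eq, Set.mem_empty_iff_false, iff_false, not_forall]
      obtain ⟨j, hj⟩ := exists_nat_gt ‖G ω‖
      exact ⟨j, not_le.2 hj⟩
    have := tendsto_measure_iInter_atTop (μ := P) (fun j => (hsets j).nullMeasurableSet)
      hanti ⟨0, measure_ne_top _ _⟩
    rw [hempty, measure_empty] at this
    have h2 := (ENNReal.tendsto_toReal (by simp)).comp this
    simpa [Function.comp_def] using h2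
  rw [tendsto_order]
  constructor
  · intro a ha
    exact Eventually.of_forall fun n => lt_of_lt_of_le ha ENNReal.toReal_nonneg
  · intro ε hε
    obtain ⟨j, hj⟩ := (htailG.eventually (gt_mem_nhds (show (0:ℝ) < ε/2 by linarith))).exists
    have hint : ∫ ω, cutoff k (j : ℝ) (G ω) ∂P < ε / 2 :=
      lt_of_le_of_lt (integral_cutoff_le hG _) hj
    have hev1 : ∀ᶠ n in atTop, ∫ ω, cutoff k (j : ℝ) (X n ω) ∂P < ε / 2 + ε / 2 := by
      have := hconv (cutoff k (j : ℝ))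
      exact this.eventually_lt_const (by linarith)
    have hev2 : ∀ᶠ n in atTop, (j : ℝ) + 1 ≤ cseq n := hc.eventually_ge_atTop _
    filter_upwards [hev1, hev2] with n h1 h2
    calc (P {ω | cseq n ≤ ‖X n ω‖}).toReal
        ≤ ∫ ω, cutoff k (j : ℝ) (X n ω) ∂P := le_integral_cutoff (hX n) h2
      _ < ε := by linarith

end tail
end Stmt5Aux

/-- Theorem 3.1 (nondegenerate case): assume (A2) `(P_b)` has a unique optimal
solution `x*(b)`; (B1) `G_n = r_n (b_n - b)` converges in distribution to a
random vector `G` with law absolutely continuous w.r.t. Lebesgue measure on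
`ℝ^m`, `r_n → ∞`; (B2) `ℙ(OPT(b_n) ≠ ∅) → 1`; and `x*(b)` is nondegenerate
(exactly `m` nonzero coordinates). Then there is a unique basis `I₁` that is
both primal and dual feasible, and for any measurable choice `x*(b_n)` of an
optimal solution, `r_n (x*(b_n) - x*(b))` converges in distribution to
`x(I₁, G)`, an invertible (injective) linear function of `G`. -/
theorem stmt5 {Ω : Type*} [MeasurableSpace Ω] (P : Measure Ω) [IsProbabilityMeasure P]
    (hm : 1 ≤ m) (hmd : m ≤ d)
    (A : Matrix (Fin m) (Fin d) ℝ) (hA : A.rank = m)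
    (b : Fin m → ℝ) (c : Fin d → ℝ)
    (xstar : Fin d → ℝ) (hunique : optSet A b c = {xstar})
    (hnondeg : {i | xstar i ≠ 0}.ncard = m)
    (bn : ℕ → Ω → Fin m → ℝ) (hbn : ∀ n, Measurable (bn n))
    (rn : ℕ → ℝ) (hrnpos : ∀ n, 0 < rn n) (hrn : Tendsto rn atTop atTop)
    (G : Ω → Fin m → ℝ) (hG : Measurable G)
    (hclt : TendstoInDistribution P (fun n ω => rn n • (bn n ω - b)) G)
    (habs : Measure.map G P ≪ (volume : Measure (Fin m → ℝ)))
    (hfeas : Tendsto (fun n => P {ω | (optSet A (bn n ω) c).Nonempty}) atTop (𝓝 1))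
    (xn : ℕ → Ω → Fin d → ℝ) (hxn : ∀ n, Measurable (xn n))
    (hxnopt : ∀ n ω, (optSet A (bn n ω) c).Nonempty → xn n ω ∈ optSet A (bn n ω) c) :
    (∃! e : Fin m → Fin d,
        PrimalFeasibleBasis A b e ∧ DualFeasibleBasis A c e) ∧
    ∀ e : Fin m → Fin d, PrimalFeasibleBasis A b e → DualFeasibleBasis A c e →
      Function.Injective (fun v : Fin m → ℝ => basicSol A e v) ∧
      TendstoInDistribution P (fun n ω => rn n • (xn n ω - xstar))
        (fun ω => basicSol A e (G ω)) := by
  classical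
  obtain ⟨e0, hmono, hrange⟩ := Stmt5Aux.exists_e hnondeg
  have hdet : IsUnit (subMat A e0).det := Stmt5Aux.det_unit hunique hmono hrange
  have hbs : basicSol A e0 b = xstar := Stmt5Aux.basicSol_b hunique hmono hrange
  have hpfb : PrimalFeasibleBasis A b e0 := Stmt5Aux.primal_feas hunique hmono hrange
  have hdfb : DualFeasibleBasis A c e0 := Stmt5Aux.dual_feas hunique hmono hrange
  have huniqb : ∀ e', PrimalFeasibleBasis A b e' → DualFeasibleBasis A c e' → e' = e0 :=
    fun e' hp' hd' => Stmt5Aux.basis_unique hunique hmono hrange e' hp' hd'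
  constructor
  · exact ⟨e0, ⟨hpfb, hdfb⟩, fun e' h' => huniqb e' h'.1 h'.2⟩
  intro e' hp' hd'
  have he' : e' = e0 := huniqb e' hp' hd'
  subst he'
  constructor
  · -- injectivity
    intro u v h
    have h' : basicSol A e' u = basicSol A e' v := h
    have h2 : (subMat A e')⁻¹ *ᵥ u = (subMat A e')⁻¹ *ᵥ v := by
      funext j
      have hj := congrFun h' (e' j)
      rwa [Stmt5Aux.basicSol_eq, Stmt5Aux.basicSol_eq,
        Stmt5Aux.extMap_apply hmono.injective, Stmt5Aux.extMap_apply hmono.injective] at hj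
    have hu := congrArg (fun w => subMat A e' *ᵥ w) h2
    simpa [Matrix.mulVec_mulVec, Matrix.mul_nonsing_inv _ hdet, Matrix.one_mulVec] using hu
  · -- convergence in distribution
    have hLcont : Continuous fun v : Fin m → ℝ => basicSol A e' v :=
      Stmt5Aux.continuous_basicSol A e'
    set Gn : ℕ → Ω → Fin m → ℝ := fun n ω => rn n • (bn n ω - b) with hGn
    have hGnmeas : ∀ n, Measurable (Gn n) := fun n =>
      ((hbn n).sub measurable_const).const_smul (rn n)
    set M' : ℕ → Set Ω := fun n => {ω | xn n ω ≠ basicSol A e' (bn n ω)} with hM'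
    have hM'meas : ∀ n, MeasurableSet (M' n) := fun n =>
      (measurableSet_eq_fun (hxn n) (hLcont.measurable.comp (hbn n))).compl
    set B : ℕ → Set Ω := fun n => {ω | ¬ ∀ j, 0 ≤ ((subMat A e')⁻¹ *ᵥ bn n ω) j} with hB
    have hBmeas : ∀ n, MeasurableSet (B n) := by
      intro n
      have h1 : ∀ j : Fin m, MeasurableSet {ω | 0 ≤ ((subMat A e')⁻¹ *ᵥ bn n ω) j} :=
        fun j => measurableSet_le measurable_const
          (Stmt5Aux.measurable_mulVec_comp _ (hbn n) j)
      have h2 : B n = (⋂ j, {ω | 0 ≤ ((subMat A e')⁻¹ *ᵥ bn n ω) j})ᶜ := by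
        ext ω; simp [hB]
      rw [h2]
      exact (MeasurableSet.iInter h1).compl
    have hpoint : ∀ n ω, ω ∉ M' n →
        rn n • (xn n ω - xstar) = basicSol A e' (Gn n ω) := by
      intro n ω hω
      have hxe : xn n ω = basicSol A e' (bn n ω) := not_not.1 hω
      show rn n • (xn n ω - xstar) = basicSol A e' (rn n • (bn n ω - b))
      rw [Stmt5Aux.basicSol_smul_sub, hbs, hxe]
    have hopt_eq : ∀ n ω, (optSet A (bn n ω) c).Nonempty → ω ∉ B n → ω ∉ M' n := by
      intro n ω hne hgood
      have hg' : ∀ j, 0 ≤ ((subMat A e')⁻¹ *ᵥ bn n ω) j := not_not.1 hgood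
      have := Stmt5Aux.opt_eq_basicSol hunique hmono.injective hrange hdet
        (bn n ω) hg' (hxnopt n ω hne)
      simp only [hM', Set.mem_setOf_eq, not_not]
      exact this
    obtain ⟨δ, hδpos, hδle⟩ : ∃ δ, 0 < δ ∧ ∀ j, δ ≤ xstar (e' j) := by
      haveI : Nonempty (Fin m) := Fin.pos_iff_nonempty.1 hm
      obtain ⟨j0, -, hj0⟩ := Finset.exists_min_image Finset.univ (fun j => xstar (e' j))
        ⟨Classical.arbitrary _, Finset.mem_univ _⟩
      exact ⟨xstar (e' j0), Stmt5Aux.xstar_pos hunique hmono.injective hrange j0,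
        fun j => hj0 j (Finset.mem_univ j)⟩
    set Minv := (subMat A e')⁻¹ with hMinv
    set C : ℝ := (∑ j, ∑ l, |Minv j l|) + 1 with hC
    have hCpos : 0 < C :=
      add_pos_of_nonneg_of_pos
        (Finset.sum_nonneg fun j _ => Finset.sum_nonneg fun l _ => abs_nonneg _) one_pos
    have hbound : ∀ (g : Fin m → ℝ) (j : Fin m), |(Minv *ᵥ g) j| ≤ C * ‖g‖ := by
      intro g j
      have h1 : |(Minv *ᵥ g) j| ≤ ∑ l, |Minv j l| * ‖g‖ := by
        show |∑ l, Minv j l * g l| ≤ _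
        refine le_trans (Finset.abs_sum_le_sum_abs _ _) ?_
        refine Finset.sum_le_sum fun l _ => ?_
        rw [abs_mul]
        exact mul_le_mul_of_nonneg_left (by simpa using norm_le_pi_norm g l) (abs_nonneg _)
      have h2 : ∑ l, |Minv j l| * ‖g‖ = (∑ l, |Minv j l|) * ‖g‖ := (Finset.sum_mul _ _ _).symm
      have h3 : (∑ l, |Minv j l|) ≤ C := by
        rw [hC]
        have := Finset.single_le_sum
          (f := fun j' => ∑ l, |Minv j' l|)
          (fun j' _ => Finset.sum_nonneg fun l _ => abs_nonneg _) (Finset.mem_univ j)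
        linarith
      calc |(Minv *ᵥ g) j| ≤ (∑ l, |Minv j l|) * ‖g‖ := by rw [← h2]; exact h1
        _ ≤ C * ‖g‖ := mul_le_mul_of_nonneg_right h3 (norm_nonneg g)
    set cseq : ℕ → ℝ := fun n => rn n * (δ / C) with hcseq
    have hcseq_tendsto : Tendsto cseq atTop atTop :=
      hrn.atTop_mul_const (div_pos hδpos hCpos)
    have hinvb : Minv *ᵥ b = fun j => xstar (e' j) := by
      funext j
      have := congrFun hbs (e' j)
      rwa [Stmt5Aux.basicSol_eq, Stmt5Aux.extMap_apply hmono.injective] at this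
    have hBsub : ∀ n, B n ⊆ {ω | cseq n ≤ ‖Gn n ω‖} := by
      intro n ω hω
      simp only [hB, Set.mem_setOf_eq, not_forall, not_le] at hω
      obtain ⟨j, hj⟩ := hω
      have h1 : (Minv *ᵥ Gn n ω) j = rn n * ((Minv *ᵥ (bn n ω - b)) j) := by
        have : Minv *ᵥ Gn n ω = rn n • (Minv *ᵥ (bn n ω - b)) := by
          rw [hGn]; exact Matrix.mulVec_smul _ _ _
        rw [this, Pi.smul_apply, smul_eq_mul]
      have h2 : (Minv *ᵥ (bn n ω - b)) j = (Minv *ᵥ bn n ω) j - xstar (e' j) := by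
        rw [Matrix.mulVec_sub, Pi.sub_apply, hinvb]
      have hneg : (Minv *ᵥ (bn n ω - b)) j ≤ -δ := by
        have := hδle j
        rw [h2]
        linarith
      have habs : δ ≤ |(Minv *ᵥ (bn n ω - b)) j| := by
        rw [abs_of_nonpos (by linarith)]
        linarith
      have h3 : δ * rn n ≤ |(Minv *ᵥ Gn n ω) j| := by
        rw [h1, abs_mul, abs_of_pos (hrnpos n)]
        have hr := (hrnpos n).le
        nlinarith
      have h4 := hbound (Gn n ω) j
      have h5 : δ * rn n ≤ C * ‖Gn n ω‖ := h3.trans h4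
      show rn n * (δ / C) ≤ ‖Gn n ω‖
      rw [mul_comm, div_mul_eq_mul_div, div_le_iff₀ hCpos]
      nlinarith [mul_comm C ‖Gn n ω‖]
    have htail : Tendsto (fun n => (P {ω | cseq n ≤ ‖Gn n ω‖}).toReal) atTop (𝓝 0) :=
      Stmt5Aux.tail_tendsto_zero hGnmeas hG (fun f => hclt f) hcseq_tendsto
    have hPB : Tendsto (fun n => (P (B n)).toReal) atTop (𝓝 0) := by
      refine squeeze_zero (fun n => ENNReal.toReal_nonneg) (fun n => ?_) htail
      exact (ENNReal.toReal_le_toReal (measure_ne_top _ _) (measure_ne_top _ _)).2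
        (measure_mono (hBsub n))
    have hSsub : ∀ n, {ω | (optSet A (bn n ω) c).Nonempty} ⊆ (M' n \ B n)ᶜ := by
      intro n ω hω
      simp only [Set.mem_compl_iff, Set.mem_diff, not_and]
      intro h1 h2
      exact absurd h1 (hopt_eq n ω hω h2)
    have hS1 : Tendsto (fun n => (P {ω | (optSet A (bn n ω) c).Nonempty}).toReal)
        atTop (𝓝 1) := by
      have := (ENNReal.tendsto_toReal ENNReal.one_ne_top).comp hfeas
      simpa [Function.comp_def] using this
    have hPM'B : Tendsto (fun n => (P (M' n \ B n)).toReal) atTop (𝓝 0) := by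
      have hle : ∀ n, (P (M' n \ B n)).toReal
          ≤ 1 - (P {ω | (optSet A (bn n ω) c).Nonempty}).toReal := by
        intro n
        have hmeasMB : MeasurableSet (M' n \ B n) := (hM'meas n).diff (hBmeas n)
        have h1 : P {ω | (optSet A (bn n ω) c).Nonempty} ≤ P ((M' n \ B n)ᶜ) :=
          measure_mono (hSsub n)
        have h2 : (P ((M' n \ B n)ᶜ)).toReal = 1 - (P (M' n \ B n)).toReal := by
          rw [prob_compl_eq_one_sub hmeasMB,
            ENNReal.toReal_sub_of_le prob_le_one (by simp)]
          simp
        have h4 : (P {ω | (optSet A (bn n ω) c).Nonempty}).toReal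
            ≤ (P ((M' n \ B n)ᶜ)).toReal :=
          (ENNReal.toReal_le_toReal (measure_ne_top _ _) (measure_ne_top _ _)).2 h1
        linarith
      refine squeeze_zero (fun n => ENNReal.toReal_nonneg) hle ?_
      have : Tendsto (fun n => 1 - (P {ω | (optSet A (bn n ω) c).Nonempty}).toReal)
          atTop (𝓝 (1 - 1)) := tendsto_const_nhds.sub hS1
      simpa using this
    have hPM : Tendsto (fun n => (P (M' n)).toReal) atTop (𝓝 0) := by
      refine squeeze_zero (fun n => ENNReal.toReal_nonneg) (fun n => ?_)
        (by simpa using hPB.add hPM'B)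
      have hsub : M' n ⊆ B n ∪ (M' n \ B n) := by
        intro ω hω
        by_cases hb : ω ∈ B n
        · exact Or.inl hb
        · exact Or.inr ⟨hω, hb⟩
      calc (P (M' n)).toReal ≤ (P (B n ∪ (M' n \ B n))).toReal :=
            (ENNReal.toReal_le_toReal (measure_ne_top _ _) (measure_ne_top _ _)).2
              (measure_mono hsub)
        _ ≤ (P (B n)).toReal + (P (M' n \ B n)).toReal := by
            rw [← ENNReal.toReal_add (measure_ne_top _ _) (measure_ne_top _ _)]
            exact (ENNReal.toReal_le_toReal (measure_ne_top _ _)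
              (ENNReal.add_ne_top.2 ⟨measure_ne_top _ _, measure_ne_top _ _⟩)).2
              (measure_union_le _ _)
    -- final assembly
    intro f
    set g := f.compContinuous ⟨fun v : Fin m → ℝ => basicSol A e' v, hLcont⟩ with hg
    have hgapp : ∀ x : Fin m → ℝ, g x = f (basicSol A e' x) := fun x => rfl
    have hXnmeas : ∀ n, Measurable fun ω => rn n • (xn n ω - xstar) := fun n =>
      ((hxn n).sub measurable_const).const_smul (rn n)
    rw [tendsto_iff_dist_tendsto_zero]
    have hterm1 : Tendsto (fun n => dist (∫ ω, f (rn n • (xn n ω - xstar)) ∂P)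
        (∫ ω, g (Gn n ω) ∂P)) atTop (𝓝 0) := by
      refine squeeze_zero (fun n => dist_nonneg) (fun n => ?_)
        (by simpa using hPM.const_mul (2 * ‖f‖))
      have hi1 : Integrable (fun ω => f (rn n • (xn n ω - xstar))) P :=
        Stmt5Aux.integrable_bcf_comp f (hXnmeas n)
      have hi2 : Integrable (fun ω => g (Gn n ω)) P :=
        Stmt5Aux.integrable_bcf_comp g (hGnmeas n)
      rw [Real.dist_eq, ← integral_sub hi1 hi2, ← Real.norm_eq_abs]
      refine le_trans (norm_integral_le_integral_norm _) ?_
      have hind : ∀ ω, ‖f (rn n • (xn n ω - xstar)) - g (Gn n ω)‖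
          ≤ (M' n).indicator (fun _ => 2 * ‖f‖) ω := by
        intro ω
        by_cases hω : ω ∈ M' n
        · rw [Set.indicator_of_mem hω]
          calc ‖f (rn n • (xn n ω - xstar)) - g (Gn n ω)‖
              ≤ ‖f (rn n • (xn n ω - xstar))‖ + ‖g (Gn n ω)‖ := norm_sub_le _ _
            _ ≤ ‖f‖ + ‖f‖ := add_le_add (f.norm_coe_le_norm _)
                (le_trans (g.norm_coe_le_norm _)
                  (BoundedContinuousFunction.norm_compContinuous_le f _))
            _ = 2 * ‖f‖ := by ring
        · rw [Set.indicator_of_notMem hω, hgapp, ← hpoint n ω hω]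
          simp
      refine le_trans (integral_mono (hi1.sub hi2).norm
        ((integrable_const _).indicator (hM'meas n)) hind) ?_
      rw [integral_indicator_const _ (hM'meas n), smul_eq_mul]
      exact le_of_eq (mul_comm _ _)
    have hterm2 : Tendsto (fun n => dist (∫ ω, g (Gn n ω) ∂P)
        (∫ ω, f (basicSol A e' (G ω)) ∂P)) atTop (𝓝 0) :=
      tendsto_iff_dist_tendsto_zero.1 (hclt g)
    refine squeeze_zero (fun n => dist_nonneg)
      (fun n => dist_triangle _ (∫ ω, g (Gn n ω) ∂P) _) ?_
    simpa using hterm1.add hterm2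

end
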